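/- For any policy π and transition kernels P_s, P_t on a finite MDP with rewards bounded by R_max, if ν^π_{P_s} and ν^π_{P_t} both have full support on S×A×S, then J^π_{P_t} ≥ J^π_{P_s} − (4 R_max/(1−γ)) · √(D_JS(ν^π_{P_s} ‖ ν^π_{P_t})), where D_JS is the Jensen–Shannon divergence. -/

import Mathlib

open scoped BigOperators

section MDP

variable {S A : Type*} [Fintype S] [Fintype A] [DecidableEq S]

/-- One-step state distribution update under kernel `P` and policy `π`. -/
noncomputable def stepDist (P : S → A → S → ℝ) (π : S → A → ℝ) (ρ : S → ℝ) : S → ℝ :=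
  fun s => ∑ s' : S, ∑ a : A, ρ s' * π s' a * P s' a s

/-- Distribution of the state at time `t`. -/
noncomputable def stateDist (P : S → A → S → ℝ) (π : S → A → ℝ) (ρ₀ : S → ℝ) : ℕ → S → ℝ
  | 0 => ρ₀
  | t + 1 => stepDist P π (stateDist P π ρ₀ t)

/-- Discounted state visitation distribution `d^π_P`. -/
noncomputable def visitS (γ : ℝ) (P : S → A → S → ℝ) (π : S → A → ℝ) (ρ₀ : S → ℝ) : S → ℝ :=
  fun s => (1 - γ) * ∑' t : ℕ, γ ^ t * stateDist P π ρ₀ t s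

/-- Discounted state-action visitation distribution `μ^π_P`. -/
noncomputable def visitSA (γ : ℝ) (P : S → A → S → ℝ) (π : S → A → ℝ) (ρ₀ : S → ℝ) :
    S × A → ℝ :=
  fun x => (1 - γ) * ∑' t : ℕ, γ ^ t * stateDist P π ρ₀ t x.1 * π x.1 x.2

/-- Discounted transition (state-action-next-state) visitation distribution `ν^π_P`. -/
noncomputable def visitT (γ : ℝ) (P : S → A → S → ℝ) (π : S → A → ℝ) (ρ₀ : S → ℝ) :
    S × A × S → ℝ :=
  fun x => (1 - γ) * ∑' t : ℕ, γ ^ t * stateDist P π ρ₀ t x.1 * π x.1 x.2.1 * P x.1 x.2.1 x.2.2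

/-- Expected discounted return starting from initial distribution `ρ₀`. -/
noncomputable def ret (γ : ℝ) (r : S → A → S → ℝ) (P : S → A → S → ℝ) (π : S → A → ℝ)
    (ρ₀ : S → ℝ) : ℝ :=
  ∑' t : ℕ, γ ^ t *
    ∑ s : S, ∑ a : A, ∑ s' : S, stateDist P π ρ₀ t s * π s a * P s a s' * r s a s'

/-- Value function `V^π_P`. -/
noncomputable def valueFn (γ : ℝ) (r : S → A → S → ℝ) (P : S → A → S → ℝ) (π : S → A → ℝ) :
    S → ℝ :=
  fun s => ret γ r P π (fun s'' => if s'' = s then 1 else 0)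

/-- Expected discounted return `J^π_P = E_{ρ₀}[V^π_P]`. -/
noncomputable def expRet (γ : ℝ) (r : S → A → S → ℝ) (P : S → A → S → ℝ) (π : S → A → ℝ)
    (ρ₀ : S → ℝ) : ℝ :=
  ∑ s : S, ρ₀ s * valueFn γ r P π s

/-- Total variation distance `(1/2) ∑ |p - q|`. -/
noncomputable def tvDist {X : Type*} [Fintype X] (p q : X → ℝ) : ℝ :=
  (1 / 2) * ∑ x : X, |p x - q x|

/-- Kullback–Leibler divergence on a finite set. -/
noncomputable def klDiv' {X : Type*} [Fintype X] (p q : X → ℝ) : ℝ :=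
  ∑ x : X, p x * Real.log (p x / q x)

/-- Jensen–Shannon divergence on a finite set. -/
noncomputable def jsDiv {X : Type*} [Fintype X] (p q : X → ℝ) : ℝ :=
  (1 / 2) * klDiv' p (fun x => (p x + q x) / 2) +
    (1 / 2) * klDiv' q (fun x => (p x + q x) / 2)

/-- `π` is a stochastic policy. -/
def IsStochPol (π : S → A → ℝ) : Prop :=
  ∀ s, (∀ a, 0 ≤ π s a) ∧ ∑ a : A, π s a = 1

/-- `P` is a stochastic transition kernel. -/
def IsStochKer (P : S → A → S → ℝ) : Prop :=
  ∀ s a, (∀ s', 0 ≤ P s a s') ∧ ∑ s' : S, P s a s' = 1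

/-- `p` is a probability mass function. -/
def IsProb {X : Type*} [Fintype X] (p : X → ℝ) : Prop :=
  (∀ x, 0 ≤ p x) ∧ ∑ x : X, p x = 1

end MDP


set_option linter.unusedSectionVars false

lemma lemA (x : ℝ) (hx0 : 0 ≤ x) (hx1 : x < 1) :
    2 * x ≤ Real.log (1 + x) - Real.log (1 - x) := by
  set f : ℝ → ℝ := fun x => Real.log (1 + x) - Real.log (1 - x) - 2 * x with hf
  have hne1 : ∀ y ∈ Set.Ico (0:ℝ) 1, (1:ℝ) + y ≠ 0 := fun y hy => by
    have := hy.1; nlinarith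
  have hne2 : ∀ y ∈ Set.Ico (0:ℝ) 1, (1:ℝ) - y ≠ 0 := fun y hy => by
    have := hy.2; intro h; nlinarith
  have hder : ∀ y ∈ Set.Ioo (0:ℝ) 1,
      HasDerivAt f (1 / (1 + y) + 1 / (1 - y) - 2) y := by
    intro y hy
    have h1 : HasDerivAt (fun x : ℝ => Real.log (1 + x)) (1 / (1 + y)) y := by
      have := (((hasDerivAt_id y).const_add 1).log (by nlinarith [hy.1] : (1:ℝ) + y ≠ 0))
      simpa using this
    have h2 : HasDerivAt (fun x : ℝ => Real.log (1 - x)) (-1 / (1 - y)) y := by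
      have := (((hasDerivAt_id y).const_sub 1).log (by intro h; nlinarith [hy.2] : (1:ℝ) - y ≠ 0))
      simpa using this
    have := (h1.sub h2).sub ((hasDerivAt_id y).const_mul 2)
    exact this.congr_deriv (by ring)
  have hmono : MonotoneOn f (Set.Ico 0 1) := by
    apply monotoneOn_of_deriv_nonneg (convex_Ico 0 1)
    · apply ContinuousOn.sub
      apply ContinuousOn.sub
      · exact (continuousOn_const.add continuousOn_id).log hne1
      · exact (continuousOn_const.sub continuousOn_id).log hne2
      · exact continuousOn_const.mul continuousOn_id
    · rw [interior_Ico]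
      intro y hy
      exact ((hder y hy).differentiableAt).differentiableWithinAt
    · rw [interior_Ico]
      intro y hy
      rw [(hder y hy).deriv]
      have hy1 : (0:ℝ) < 1 + y := by nlinarith [hy.1]
      have hy2 : (0:ℝ) < 1 - y := by nlinarith [hy.2]
      have : 1 / (1 + y) + 1 / (1 - y) - 2 = 2 * y ^ 2 / ((1 + y) * (1 - y)) := by
        field_simp; ring
      rw [this]; positivity
  have h0 : f 0 = 0 := by simp [hf]
  have := hmono (Set.mem_Ico.2 ⟨le_refl 0, one_pos⟩) (Set.mem_Ico.2 ⟨hx0, hx1⟩) hx0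
  rw [h0] at this
  simp only [hf] at this
  linarith

lemma lemB (x : ℝ) (hx0 : 0 ≤ x) (hx1 : x < 1) :
    x ^ 2 ≤ (1 + x) * Real.log (1 + x) + (1 - x) * Real.log (1 - x) := by
  set f : ℝ → ℝ := fun x => (1 + x) * Real.log (1 + x) + (1 - x) * Real.log (1 - x) - x ^ 2
    with hf
  have hne1 : ∀ y ∈ Set.Ico (0:ℝ) 1, (1:ℝ) + y ≠ 0 := fun y hy => by
    have := hy.1; nlinarith
  have hne2 : ∀ y ∈ Set.Ico (0:ℝ) 1, (1:ℝ) - y ≠ 0 := fun y hy => by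
    have := hy.2; intro h; nlinarith
  have hder : ∀ y ∈ Set.Ioo (0:ℝ) 1,
      HasDerivAt f (Real.log (1 + y) - Real.log (1 - y) - 2 * y) y := by
    intro y hy
    have hy1 : (0:ℝ) < 1 + y := by nlinarith [hy.1]
    have hy2 : (0:ℝ) < 1 - y := by nlinarith [hy.2]
    have ha : HasDerivAt (fun x : ℝ => 1 + x) 1 y := by
      simpa using (hasDerivAt_id y).const_add 1
    have hb : HasDerivAt (fun x : ℝ => 1 - x) (-1) y := by
      simpa using (hasDerivAt_id y).const_sub 1
    have h1 : HasDerivAt (fun x : ℝ => Real.log (1 + x)) (1 / (1 + y)) y := by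
      simpa using ha.log hy1.ne'
    have h2 : HasDerivAt (fun x : ℝ => Real.log (1 - x)) (-1 / (1 - y)) y := by
      simpa using hb.log hy2.ne'
    have hsq : HasDerivAt (fun x : ℝ => x ^ 2) (2 * y) y := by
      simpa using (hasDerivAt_pow 2 y)
    have := ((ha.mul h1).add (hb.mul h2)).sub hsq
    refine this.congr_deriv ?_
    field_simp
    ring
  have hmono : MonotoneOn f (Set.Ico 0 1) := by
    apply monotoneOn_of_deriv_nonneg (convex_Ico 0 1)
    · apply ContinuousOn.sub
      apply ContinuousOn.add
      · exact (continuousOn_const.add continuousOn_id).mul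
          ((continuousOn_const.add continuousOn_id).log hne1)
      · exact (continuousOn_const.sub continuousOn_id).mul
          ((continuousOn_const.sub continuousOn_id).log hne2)
      · exact (continuousOn_id.pow 2)
    · rw [interior_Ico]
      intro y hy
      exact ((hder y hy).differentiableAt).differentiableWithinAt
    · rw [interior_Ico]
      intro y hy
      rw [(hder y hy).deriv]
      have := lemA y hy.1.le hy.2
      linarith
  have h0 : f 0 = 0 := by simp [hf]
  have := hmono (Set.mem_Ico.2 ⟨le_refl 0, one_pos⟩) (Set.mem_Ico.2 ⟨hx0, hx1⟩) hx0
  rw [h0] at this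
  simp only [hf] at this
  linarith

lemma pointwise_aux (p q : ℝ) (hp : 0 < p) (hq : 0 < q) (hle : q ≤ p) :
    (p - q) ^ 2 / (2 * (p + q)) ≤
      p * Real.log (p / ((p + q) / 2)) + q * Real.log (q / ((p + q) / 2)) := by
  have hs : (0:ℝ) < p + q := by linarith
  set x : ℝ := (p - q) / (p + q) with hx
  have hx0 : 0 ≤ x := div_nonneg (by linarith) hs.le
  have hx1 : x < 1 := by
    rw [hx, div_lt_one hs]; linarith
  have h1x : 1 + x = 2 * p / (p + q) := by rw [hx]; field_simp; ring
  have h2x : 1 - x = 2 * q / (p + q) := by rw [hx]; field_simp; ring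
  have e1 : p / ((p + q) / 2) = 1 + x := by rw [h1x]; field_simp
  have e2 : q / ((p + q) / 2) = 1 - x := by rw [h2x]; field_simp
  have key := lemB x hx0 hx1
  rw [e1, e2]
  have hmul := mul_le_mul_of_nonneg_left key (by linarith : (0:ℝ) ≤ (p + q) / 2)
  have eL : (p + q) / 2 * x ^ 2 = (p - q) ^ 2 / (2 * (p + q)) := by
    rw [hx]; field_simp
  have eR : (p + q) / 2 * ((1 + x) * Real.log (1 + x) + (1 - x) * Real.log (1 - x))
      = p * Real.log (1 + x) + q * Real.log (1 - x) := by
    rw [h1x, h2x]; field_simp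
  rw [eL, eR] at hmul
  exact hmul

lemma pointwise (p q : ℝ) (hp : 0 < p) (hq : 0 < q) :
    (p - q) ^ 2 / (2 * (p + q)) ≤
      p * Real.log (p / ((p + q) / 2)) + q * Real.log (q / ((p + q) / 2)) := by
  rcases le_total q p with h | h
  · exact pointwise_aux p q hp hq h
  · have := pointwise_aux q p hq hp h
    have e : q + p = p + q := by ring
    rw [e] at this
    calc (p - q) ^ 2 / (2 * (p + q)) = (q - p) ^ 2 / (2 * (p + q)) := by ring_nf
    _ ≤ _ := by linarith

lemma js_nonneg_and_tv {X : Type*} [Fintype X] (p q : X → ℝ)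
    (hp : ∀ x, 0 < p x) (hq : ∀ x, 0 < q x)
    (hps : ∑ x : X, p x = 1) (hqs : ∑ x : X, q x = 1) :
    0 ≤ jsDiv p q ∧ ∑ x : X, |p x - q x| ≤ Real.sqrt (8 * jsDiv p q) := by
  set A : ℝ := ∑ x : X, (p x - q x) ^ 2 / (p x + q x) with hA
  have hApt : ∀ x : X, 0 ≤ (p x - q x) ^ 2 / (p x + q x) := fun x => by
    have := hp x; have := hq x; positivity
  have hAnn : 0 ≤ A := Finset.sum_nonneg fun x _ => hApt x
  -- A/2 ≤ 2 * jsDiv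
  have hAjs : A / 2 ≤ 2 * jsDiv p q := by
    have h2js : 2 * jsDiv p q =
        ∑ x : X, (p x * Real.log (p x / ((p x + q x) / 2))
          + q x * Real.log (q x / ((p x + q x) / 2))) := by
      simp only [jsDiv, klDiv', Finset.sum_add_distrib]
      ring
    rw [h2js, hA]
    have : ∀ x : X, (p x - q x) ^ 2 / (p x + q x) / 2
        ≤ p x * Real.log (p x / ((p x + q x) / 2))
          + q x * Real.log (q x / ((p x + q x) / 2)) := by
      intro x
      have := pointwise (p x) (q x) (hp x) (hq x)
      calc (p x - q x) ^ 2 / (p x + q x) / 2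
          = (p x - q x) ^ 2 / (2 * (p x + q x)) := by
            rw [div_div, mul_comm]
        _ ≤ _ := this
    calc (∑ x : X, (p x - q x) ^ 2 / (p x + q x)) / 2
        = ∑ x : X, (p x - q x) ^ 2 / (p x + q x) / 2 := by
          rw [Finset.sum_div]
      _ ≤ _ := Finset.sum_le_sum fun x _ => this x
  have hjs : 0 ≤ jsDiv p q := by linarith
  refine ⟨hjs, ?_⟩
  -- Cauchy-Schwarz
  have hcs : (∑ x : X, |p x - q x|) ^ 2 ≤ A * 2 := by
    have := Finset.sum_mul_sq_le_sq_mul_sq Finset.univ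
      (fun x => |p x - q x| / Real.sqrt (p x + q x))
      (fun x => Real.sqrt (p x + q x))
    have e1 : ∀ x : X, |p x - q x| / Real.sqrt (p x + q x) * Real.sqrt (p x + q x)
        = |p x - q x| := by
      intro x
      have hpos : (0:ℝ) < p x + q x := by have := hp x; have := hq x; linarith
      rw [div_mul_cancel₀]
      exact (Real.sqrt_pos.2 hpos).ne'
    have e2 : ∀ x : X, (|p x - q x| / Real.sqrt (p x + q x)) ^ 2
        = (p x - q x) ^ 2 / (p x + q x) := by
      intro x
      have hpos : (0:ℝ) < p x + q x := by have := hp x; have := hq x; linarith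
      rw [div_pow, sq_abs, Real.sq_sqrt hpos.le]
    have e3 : ∀ x : X, (Real.sqrt (p x + q x)) ^ 2 = p x + q x := by
      intro x
      have hpos : (0:ℝ) < p x + q x := by have := hp x; have := hq x; linarith
      exact Real.sq_sqrt hpos.le
    simp only [e1, e2, e3] at this
    have e4 : ∑ x : X, (p x + q x) = 2 := by
      rw [Finset.sum_add_distrib, hps, hqs]; norm_num
    rw [e4] at this
    exact this
  have h8 : (∑ x : X, |p x - q x|) ^ 2 ≤ 8 * jsDiv p q := by nlinarith
  have habs : 0 ≤ ∑ x : X, |p x - q x| := Finset.sum_nonneg fun x _ => abs_nonneg _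
  rw [Real.le_sqrt habs (by linarith)]
  exact h8

section AuxMDP
variable {S A : Type*} [Fintype S] [Fintype A] [DecidableEq S]

-- ## state distribution is a probability distribution
lemma stateDist_isProb (P : S → A → S → ℝ) (π : S → A → ℝ) (ρ₀ : S → ℝ)
    (hπ : IsStochPol π) (hP : IsStochKer P) (hρ : IsProb ρ₀) (t : ℕ) :
    IsProb (stateDist P π ρ₀ t) := by
  induction t with
  | zero => exact hρ
  | succ t ih =>
    constructor
    · intro s
      show 0 ≤ stepDist P π (stateDist P π ρ₀ t) s
      unfold stepDist
      apply Finset.sum_nonneg; intro s' _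
      apply Finset.sum_nonneg; intro a _
      have h1 := ih.1 s'
      have h2 := (hπ s').1 a
      have h3 := (hP s' a).1 s
      positivity
    · show ∑ s : S, stepDist P π (stateDist P π ρ₀ t) s = 1
      unfold stepDist
      rw [Finset.sum_comm]
      have key : ∀ s' : S, ∑ s : S, ∑ a : A,
          stateDist P π ρ₀ t s' * π s' a * P s' a s = stateDist P π ρ₀ t s' := by
        intro s'
        rw [Finset.sum_comm]
        have h1 : ∀ a : A, ∑ s : S, stateDist P π ρ₀ t s' * π s' a * P s' a s
            = stateDist P π ρ₀ t s' * π s' a := by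
          intro a
          rw [← Finset.mul_sum, (hP s' a).2, mul_one]
        rw [Finset.sum_congr rfl fun a _ => h1 a, ← Finset.mul_sum, (hπ s').2, mul_one]
      rw [Finset.sum_congr rfl fun s' _ => key s', ih.2]

lemma stateDist_le_one (P : S → A → S → ℝ) (π : S → A → ℝ) (ρ₀ : S → ℝ)
    (hπ : IsStochPol π) (hP : IsStochKer P) (hρ : IsProb ρ₀) (t : ℕ) (s : S) :
    stateDist P π ρ₀ t s ≤ 1 := by
  have h := stateDist_isProb P π ρ₀ hπ hP hρ t
  calc stateDist P π ρ₀ t s ≤ ∑ u : S, stateDist P π ρ₀ t u :=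
        Finset.single_le_sum (fun u _ => h.1 u) (Finset.mem_univ s)
    _ = 1 := h.2

-- ## summability helper
lemma summable_form {γ : ℝ} (hγ0 : 0 ≤ γ) (hγ1 : γ < 1) (d : ℕ → ℝ)
    (hd0 : ∀ t, 0 ≤ d t) (hd1 : ∀ t, d t ≤ 1) (c : ℝ) :
    Summable (fun t : ℕ => γ ^ t * d t * c) := by
  apply Summable.of_norm_bounded
    ((summable_geometric_of_lt_one hγ0 hγ1).mul_left |c|)
  intro t
  rw [Real.norm_eq_abs, abs_mul, abs_mul, abs_pow, abs_of_nonneg hγ0,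
    abs_of_nonneg (hd0 t)]
  have h := mul_le_mul_of_nonneg_left (hd1 t)
    (mul_nonneg (pow_nonneg hγ0 t) (abs_nonneg c))
  nlinarith [h]

-- ## representation of ret as a sum over transitions of tsums
lemma ret_repr (γ : ℝ) (hγ0 : 0 ≤ γ) (hγ1 : γ < 1)
    (r P : S → A → S → ℝ) (π : S → A → ℝ) (ρ₀ : S → ℝ)
    (hπ : IsStochPol π) (hP : IsStochKer P) (hρ : IsProb ρ₀) :
    ret γ r P π ρ₀ = ∑ x : S × A × S, ∑' t : ℕ,
      γ ^ t * stateDist P π ρ₀ t x.1 * π x.1 x.2.1 * P x.1 x.2.1 x.2.2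
        * r x.1 x.2.1 x.2.2 := by
  have hsum : ∀ x : S × A × S, Summable (fun t : ℕ =>
      γ ^ t * stateDist P π ρ₀ t x.1 * π x.1 x.2.1 * P x.1 x.2.1 x.2.2
        * r x.1 x.2.1 x.2.2) := by
    intro x
    have := summable_form hγ0 hγ1 (fun t => stateDist P π ρ₀ t x.1)
      (fun t => (stateDist_isProb P π ρ₀ hπ hP hρ t).1 x.1)
      (fun t => stateDist_le_one P π ρ₀ hπ hP hρ t x.1)
      (π x.1 x.2.1 * P x.1 x.2.1 x.2.2 * r x.1 x.2.1 x.2.2)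
    exact this.congr (fun t => by ring)
  rw [← Summable.tsum_finsetSum (fun x _ => hsum x)]
  unfold ret
  apply tsum_congr
  intro t
  rw [Fintype.sum_prod_type]
  rw [Finset.mul_sum]
  apply Finset.sum_congr rfl
  intro s _
  rw [Fintype.sum_prod_type, Finset.mul_sum]
  apply Finset.sum_congr rfl
  intro a _
  rw [Finset.mul_sum]
  apply Finset.sum_congr rfl
  intro s' _
  ring

lemma visitT_mul_r (γ : ℝ) (hγ0 : 0 ≤ γ) (hγ1 : γ < 1)
    (r P : S → A → S → ℝ) (π : S → A → ℝ) (ρ₀ : S → ℝ)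
    (hπ : IsStochPol π) (hP : IsStochKer P) (hρ : IsProb ρ₀) :
    ∑ x : S × A × S, visitT γ P π ρ₀ x * r x.1 x.2.1 x.2.2
      = (1 - γ) * ret γ r P π ρ₀ := by
  rw [ret_repr γ hγ0 hγ1 r P π ρ₀ hπ hP hρ, Finset.mul_sum]
  apply Finset.sum_congr rfl
  intro x _
  unfold visitT
  rw [mul_assoc, ← tsum_mul_right]

-- linearity of stateDist in the initial distribution
lemma stateDist_lin (P : S → A → S → ℝ) (π : S → A → ℝ) (ρ₀ : S → ℝ) (t : ℕ) (s : S) :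
    stateDist P π ρ₀ t s
      = ∑ u : S, ρ₀ u * stateDist P π (fun v => if v = u then 1 else 0) t s := by
  induction t generalizing s with
  | zero =>
    show ρ₀ s = ∑ u : S, ρ₀ u * (if s = u then 1 else 0)
    simp [mul_ite]
  | succ t ih =>
    symm
    calc ∑ u : S, ρ₀ u * stateDist P π (fun v => if v = u then 1 else 0) (t + 1) s
        = ∑ u : S, ∑ s' : S, ∑ a : A, ρ₀ u *
            (stateDist P π (fun v => if v = u then 1 else 0) t s' * π s' a * P s' a s) := by
          apply Finset.sum_congr rfl
          intro u _
          show ρ₀ u * stepDist P π _ s = _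
          unfold stepDist
          rw [Finset.mul_sum]
          exact Finset.sum_congr rfl fun s' _ => Finset.mul_sum _ _ _
      _ = ∑ s' : S, ∑ a : A, ∑ u : S, ρ₀ u *
            (stateDist P π (fun v => if v = u then 1 else 0) t s' * π s' a * P s' a s) := by
          rw [Finset.sum_comm]
          exact Finset.sum_congr rfl fun s' _ => Finset.sum_comm
      _ = ∑ s' : S, ∑ a : A,
            (∑ u : S, ρ₀ u * stateDist P π (fun v => if v = u then 1 else 0) t s')
              * (π s' a * P s' a s) := by
          apply Finset.sum_congr rfl; intro s' _
          apply Finset.sum_congr rfl; intro a _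
          rw [Finset.sum_mul]
          exact Finset.sum_congr rfl fun u _ => by ring
      _ = ∑ s' : S, ∑ a : A, stateDist P π ρ₀ t s' * π s' a * P s' a s := by
          apply Finset.sum_congr rfl; intro s' _
          apply Finset.sum_congr rfl; intro a _
          rw [← ih s']
          ring
      _ = stateDist P π ρ₀ (t + 1) s := rfl

lemma delta_isProb (u : S) : IsProb (fun v : S => if v = u then 1 else (0:ℝ)) := by
  constructor
  · intro v; by_cases h : v = u <;> simp [h]
  · simp

lemma expRet_eq_ret (γ : ℝ) (hγ0 : 0 ≤ γ) (hγ1 : γ < 1)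
    (r P : S → A → S → ℝ) (π : S → A → ℝ) (ρ₀ : S → ℝ)
    (hπ : IsStochPol π) (hP : IsStochKer P) (hρ : IsProb ρ₀) :
    expRet γ r P π ρ₀ = ret γ r P π ρ₀ := by
  have hsumδ : ∀ (u : S) (x : S × A × S), Summable (fun t : ℕ =>
      ρ₀ u * (γ ^ t * stateDist P π (fun v => if v = u then 1 else 0) t x.1
        * π x.1 x.2.1 * P x.1 x.2.1 x.2.2 * r x.1 x.2.1 x.2.2)) := by
    intro u x
    have := summable_form hγ0 hγ1
      (fun t => stateDist P π (fun v => if v = u then 1 else 0) t x.1)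
      (fun t => (stateDist_isProb P π _ hπ hP (delta_isProb u) t).1 x.1)
      (fun t => stateDist_le_one P π _ hπ hP (delta_isProb u) t x.1)
      (ρ₀ u * π x.1 x.2.1 * P x.1 x.2.1 x.2.2 * r x.1 x.2.1 x.2.2)
    exact this.congr (fun t => by ring)
  calc expRet γ r P π ρ₀
      = ∑ u : S, ρ₀ u * ∑ x : S × A × S, ∑' t : ℕ,
          γ ^ t * stateDist P π (fun v => if v = u then 1 else 0) t x.1
            * π x.1 x.2.1 * P x.1 x.2.1 x.2.2 * r x.1 x.2.1 x.2.2 := by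
        unfold expRet valueFn
        exact Finset.sum_congr rfl fun u _ => by
          rw [ret_repr γ hγ0 hγ1 r P π _ hπ hP (delta_isProb u)]
    _ = ∑ x : S × A × S, ∑ u : S, ∑' t : ℕ,
          ρ₀ u * (γ ^ t * stateDist P π (fun v => if v = u then 1 else 0) t x.1
            * π x.1 x.2.1 * P x.1 x.2.1 x.2.2 * r x.1 x.2.1 x.2.2) := by
        rw [Finset.sum_comm]
        apply Finset.sum_congr rfl; intro u _
        rw [Finset.mul_sum]
        exact Finset.sum_congr rfl fun x _ => by rw [tsum_mul_left]
    _ = ∑ x : S × A × S, ∑' t : ℕ, ∑ u : S,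
          ρ₀ u * (γ ^ t * stateDist P π (fun v => if v = u then 1 else 0) t x.1
            * π x.1 x.2.1 * P x.1 x.2.1 x.2.2 * r x.1 x.2.1 x.2.2) := by
        exact Finset.sum_congr rfl fun x _ => (Summable.tsum_finsetSum (fun u _ => hsumδ u x)).symm
    _ = ∑ x : S × A × S, ∑' t : ℕ,
          γ ^ t * stateDist P π ρ₀ t x.1 * π x.1 x.2.1 * P x.1 x.2.1 x.2.2
            * r x.1 x.2.1 x.2.2 := by
        apply Finset.sum_congr rfl; intro x _
        apply tsum_congr; intro t
        rw [stateDist_lin P π ρ₀ t x.1]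
        rw [Finset.mul_sum, Finset.sum_mul, Finset.sum_mul, Finset.sum_mul]
        exact Finset.sum_congr rfl fun u _ => by ring
    _ = ret γ r P π ρ₀ := (ret_repr γ hγ0 hγ1 r P π ρ₀ hπ hP hρ).symm

lemma triple_one (P : S → A → S → ℝ) (π : S → A → ℝ) (ρ : S → ℝ)
    (hπ : IsStochPol π) (hP : IsStochKer P) (hρ : ∑ s : S, ρ s = 1) :
    ∑ x : S × A × S, ρ x.1 * π x.1 x.2.1 * P x.1 x.2.1 x.2.2 = 1 := by
  rw [Fintype.sum_prod_type]
  have key : ∀ s : S, ∑ y : A × S, ρ s * π s y.1 * P s y.1 y.2 = ρ s := by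
    intro s
    rw [Fintype.sum_prod_type]
    have h1 : ∀ a : A, ∑ s' : S, ρ s * π s a * P s a s' = ρ s * π s a := by
      intro a; rw [← Finset.mul_sum, (hP s a).2, mul_one]
    rw [Finset.sum_congr rfl fun a _ => h1 a, ← Finset.mul_sum, (hπ s).2, mul_one]
  rw [Finset.sum_congr rfl fun s _ => key s, hρ]

lemma visitT_sum_one (γ : ℝ) (hγ0 : 0 ≤ γ) (hγ1 : γ < 1)
    (P : S → A → S → ℝ) (π : S → A → ℝ) (ρ₀ : S → ℝ)
    (hπ : IsStochPol π) (hP : IsStochKer P) (hρ : IsProb ρ₀) :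
    ∑ x : S × A × S, visitT γ P π ρ₀ x = 1 := by
  have hsum : ∀ x : S × A × S, Summable (fun t : ℕ =>
      γ ^ t * stateDist P π ρ₀ t x.1 * π x.1 x.2.1 * P x.1 x.2.1 x.2.2) := by
    intro x
    have := summable_form hγ0 hγ1 (fun t => stateDist P π ρ₀ t x.1)
      (fun t => (stateDist_isProb P π ρ₀ hπ hP hρ t).1 x.1)
      (fun t => stateDist_le_one P π ρ₀ hπ hP hρ t x.1)
      (π x.1 x.2.1 * P x.1 x.2.1 x.2.2)
    exact this.congr (fun t => by ring)
  unfold visitT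
  rw [← Finset.mul_sum, ← Summable.tsum_finsetSum (fun x _ => hsum x)]
  have inner : ∀ t : ℕ, ∑ x : S × A × S,
      γ ^ t * stateDist P π ρ₀ t x.1 * π x.1 x.2.1 * P x.1 x.2.1 x.2.2 = γ ^ t := by
    intro t
    have := triple_one P π (stateDist P π ρ₀ t) hπ hP (stateDist_isProb P π ρ₀ hπ hP hρ t).2
    calc ∑ x : S × A × S, γ ^ t * stateDist P π ρ₀ t x.1 * π x.1 x.2.1 * P x.1 x.2.1 x.2.2
        = ∑ x : S × A × S, γ ^ t *
            (stateDist P π ρ₀ t x.1 * π x.1 x.2.1 * P x.1 x.2.1 x.2.2) :=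
          Finset.sum_congr rfl fun x _ => by ring
      _ = γ ^ t * 1 := by rw [← Finset.mul_sum, this]
      _ = γ ^ t := mul_one _
  rw [tsum_congr inner, tsum_geometric_of_lt_one hγ0 hγ1]
  have : (1:ℝ) - γ ≠ 0 := by linarith
  field_simp

end AuxMDP

theorem stmt4 {S A : Type*} [Fintype S] [Fintype A] [DecidableEq S]
    (γ : ℝ) (hγ0 : 0 ≤ γ) (hγ1 : γ < 1)
    (r Ps Pt : S → A → S → ℝ) (π : S → A → ℝ) (ρ₀ : S → ℝ)
    (hπ : IsStochPol π) (hPs : IsStochKer Ps) (hPt : IsStochKer Pt) (hρ : IsProb ρ₀)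
    (Rmax : ℝ) (hr : ∀ s a s', |r s a s'| ≤ Rmax)
    (hsupp : ∀ x : S × A × S, 0 < visitT γ Ps π ρ₀ x ∧ 0 < visitT γ Pt π ρ₀ x) :
    expRet γ r Pt π ρ₀ ≥
      expRet γ r Ps π ρ₀ -
        (4 * Rmax / (1 - γ)) *
          Real.sqrt (jsDiv (visitT γ Ps π ρ₀) (visitT γ Pt π ρ₀)) := by
  rcases isEmpty_or_nonempty S with hS | hS
  · have := hρ.2; simp [Finset.univ_eq_empty] at this
  rcases isEmpty_or_nonempty A with hA | hA
  · obtain ⟨s⟩ := hS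
    have := (hπ s).2; simp [Finset.univ_eq_empty] at this
  obtain ⟨s₀⟩ := hS
  obtain ⟨a₀⟩ := hA
  have hRmax : 0 ≤ Rmax := le_trans (abs_nonneg _) (hr s₀ a₀ s₀)
  have h1γ : (0:ℝ) < 1 - γ := by linarith
  set νs := visitT γ Ps π ρ₀ with hνs
  set νt := visitT γ Pt π ρ₀ with hνt
  have hret_s : ∑ x : S × A × S, νs x * r x.1 x.2.1 x.2.2
      = (1 - γ) * expRet γ r Ps π ρ₀ := by
    rw [expRet_eq_ret γ hγ0 hγ1 r Ps π ρ₀ hπ hPs hρ]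
    exact visitT_mul_r γ hγ0 hγ1 r Ps π ρ₀ hπ hPs hρ
  have hret_t : ∑ x : S × A × S, νt x * r x.1 x.2.1 x.2.2
      = (1 - γ) * expRet γ r Pt π ρ₀ := by
    rw [expRet_eq_ret γ hγ0 hγ1 r Pt π ρ₀ hπ hPt hρ]
    exact visitT_mul_r γ hγ0 hγ1 r Pt π ρ₀ hπ hPt hρ
  have hdiff : (1 - γ) * (expRet γ r Ps π ρ₀ - expRet γ r Pt π ρ₀)
      = ∑ x : S × A × S, (νs x - νt x) * r x.1 x.2.1 x.2.2 := by
    rw [mul_sub, ← hret_s, ← hret_t, ← Finset.sum_sub_distrib]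
    exact Finset.sum_congr rfl fun x _ => (sub_mul _ _ _).symm
  have hjs := js_nonneg_and_tv νs νt (fun x => (hsupp x).1) (fun x => (hsupp x).2)
    (visitT_sum_one γ hγ0 hγ1 Ps π ρ₀ hπ hPs hρ)
    (visitT_sum_one γ hγ0 hγ1 Pt π ρ₀ hπ hPt hρ)
  obtain ⟨hjs0, htv⟩ := hjs
  have hbound : ∑ x : S × A × S, (νs x - νt x) * r x.1 x.2.1 x.2.2
      ≤ Rmax * ∑ x : S × A × S, |νs x - νt x| := by
    rw [Finset.mul_sum]
    apply Finset.sum_le_sum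
    intro x _
    calc (νs x - νt x) * r x.1 x.2.1 x.2.2 ≤ |(νs x - νt x) * r x.1 x.2.1 x.2.2| :=
          le_abs_self _
      _ = |νs x - νt x| * |r x.1 x.2.1 x.2.2| := abs_mul _ _
      _ ≤ |νs x - νt x| * Rmax :=
          mul_le_mul_of_nonneg_left (hr _ _ _) (abs_nonneg _)
      _ = Rmax * |νs x - νt x| := mul_comm _ _
  have h8 : Real.sqrt 8 ≤ 4 := by
    have h16 : Real.sqrt 8 ≤ Real.sqrt 16 := Real.sqrt_le_sqrt (by norm_num)
    have : Real.sqrt 16 = 4 := by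
      rw [show (16:ℝ) = 4 ^ 2 by norm_num, Real.sqrt_sq (by norm_num : (0:ℝ) ≤ 4)]
    linarith
  have hsqrt : Real.sqrt (8 * jsDiv νs νt) ≤ 4 * Real.sqrt (jsDiv νs νt) := by
    rw [Real.sqrt_mul (by norm_num : (0:ℝ) ≤ 8)]
    exact mul_le_mul_of_nonneg_right h8 (Real.sqrt_nonneg _)
  have key : (1 - γ) * (expRet γ r Ps π ρ₀ - expRet γ r Pt π ρ₀)
      ≤ 4 * Rmax * Real.sqrt (jsDiv νs νt) := by
    rw [hdiff]
    calc ∑ x : S × A × S, (νs x - νt x) * r x.1 x.2.1 x.2.2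
        ≤ Rmax * ∑ x : S × A × S, |νs x - νt x| := hbound
      _ ≤ Rmax * Real.sqrt (8 * jsDiv νs νt) :=
          mul_le_mul_of_nonneg_left htv hRmax
      _ ≤ Rmax * (4 * Real.sqrt (jsDiv νs νt)) :=
          mul_le_mul_of_nonneg_left hsqrt hRmax
      _ = 4 * Rmax * Real.sqrt (jsDiv νs νt) := by ring
  have h2 : expRet γ r Ps π ρ₀ - expRet γ r Pt π ρ₀
      ≤ 4 * Rmax * Real.sqrt (jsDiv νs νt) / (1 - γ) := by
    rw [le_div_iff₀ h1γ]
    linarith [key]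
  rw [ge_iff_le]
  have : 4 * Rmax / (1 - γ) * Real.sqrt (jsDiv νs νt)
      = 4 * Rmax * Real.sqrt (jsDiv νs νt) / (1 - γ) := by ring
  rw [this]
  linarith [h2]
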